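/- For all integers w ≥ 2 and h ≥ 1, with s = w + h, the binomial identity 2 · Σ_{k=0}^{w−2} C(s−3, w−1+k) · C(s−2, w−2−k) + C(s−3, w−2)² = C(2s−5, 2w−3) holds, where C(n,k) is the usual binomial coefficient (equal to 0 for k > n). -/
import Mathlib

open Finset

lemma tele (a m : ℕ) :
    ∑ k ∈ range (m + 1), Nat.choose a (m - k) * Nat.choose (a + 1) (m + 1 + k)
      = (∑ k ∈ range (m + 1), Nat.choose a (m + 1 + k) * Nat.choose (a + 1) (m - k))
        + Nat.choose a m ^ 2 := by
  have h1 : ∑ k ∈ range (m + 1), Nat.choose a (m - k) * Nat.choose (a + 1) (m + 1 + k)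
      = (∑ k ∈ range (m + 1), Nat.choose a (m - k) * Nat.choose a (m + k))
        + ∑ k ∈ range (m + 1), Nat.choose a (m - k) * Nat.choose a (m + 1 + k) := by
    rw [← Finset.sum_add_distrib]
    refine Finset.sum_congr rfl fun k _ => ?_
    have : m + 1 + k = (m + k) + 1 := by omega
    rw [this, Nat.choose_succ_succ, mul_add]
  have h2 : ∑ k ∈ range (m + 1), Nat.choose a (m + 1 + k) * Nat.choose (a + 1) (m - k)
      = (∑ k ∈ range m, Nat.choose a (m - (k + 1)) * Nat.choose a (m + (k + 1)))
        + ∑ k ∈ range (m + 1), Nat.choose a (m - k) * Nat.choose a (m + 1 + k) := by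
    rw [Finset.sum_range_succ, Finset.sum_range_succ (f := fun k =>
      Nat.choose a (m - k) * Nat.choose a (m + 1 + k))]
    have hlast : Nat.choose a (m + 1 + m) * Nat.choose (a + 1) (m - m)
        = Nat.choose a (m - m) * Nat.choose a (m + 1 + m) := by
      simp [Nat.sub_self]
    rw [hlast]
    have hmain : ∑ k ∈ range m, Nat.choose a (m + 1 + k) * Nat.choose (a + 1) (m - k)
        = ∑ k ∈ range m, (Nat.choose a (m - (k + 1)) * Nat.choose a (m + (k + 1))
            + Nat.choose a (m - k) * Nat.choose a (m + 1 + k)) := by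
      refine Finset.sum_congr rfl fun k hk => ?_
      have hk' : k < m := Finset.mem_range.mp hk
      have h3 : m - k = (m - (k + 1)) + 1 := by omega
      have h4 : m + 1 + k = m + (k + 1) := by omega
      have key : Nat.choose (a + 1) (m - k)
          = Nat.choose a (m - (k + 1)) + Nat.choose a (m - k) := by
        rw [h3, Nat.choose_succ_succ, Nat.succ_eq_add_one, ← h3]
      rw [key, h4]
      ring
    rw [hmain, Finset.sum_add_distrib]
    ring
  have h5 : ∑ k ∈ range (m + 1), Nat.choose a (m - k) * Nat.choose a (m + k)
      = (∑ k ∈ range m, Nat.choose a (m - (k + 1)) * Nat.choose a (m + (k + 1)))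
        + Nat.choose a m ^ 2 := by
    rw [Finset.sum_range_succ' (f := fun k => Nat.choose a (m - k) * Nat.choose a (m + k))]
    simp [pow_two]
  rw [h1, h2, h5]
  ring

/-- For `w ≥ 2`, `h ≥ 1` and `s = w + h`:
`2 · Σ_{k=0}^{w-2} C(s-3, w-1+k)·C(s-2, w-2-k) + C(s-3, w-2)² = C(2s-5, 2w-3)`. -/
theorem T1_identity (w h s : ℕ) (hw : 2 ≤ w) (hh : 1 ≤ h) (hs : s = w + h) :
    2 * (∑ k ∈ Finset.range (w - 1),
          Nat.choose (s - 3) (w - 1 + k) * Nat.choose (s - 2) (w - 2 - k))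
        + Nat.choose (s - 3) (w - 2) ^ 2 =
      Nat.choose (2 * s - 5) (2 * w - 3) := by
  obtain ⟨m, rfl⟩ : ∃ m, w = m + 2 := ⟨w - 2, by omega⟩
  obtain ⟨a, rfl⟩ : ∃ a, s = a + 3 := ⟨s - 3, by omega⟩
  have e1 : a + 3 - 3 = a := by omega
  have e2 : a + 3 - 2 = a + 1 := by omega
  have e3 : m + 2 - 1 = m + 1 := by omega
  have e4 : 2 * (a + 3) - 5 = a + (a + 1) := by omega
  have e5 : 2 * (m + 2) - 3 = 2 * m + 1 := by omega
  rw [e1, e2, e3, e4, e5]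
  have e6 : ∀ k, m + 2 - 2 - k = m - k := fun k => by omega
  have e7 : ∀ k, m + 2 - 1 + k = m + 1 + k := fun k => by omega
  have e8 : m + 2 - 2 = m := by omega
  simp only [e6, e7, e8]
  rw [Nat.add_choose_eq, Finset.Nat.sum_antidiagonal_eq_sum_range_succ_mk]
  simp only [Nat.succ_eq_add_one]
  have e9 : 2 * m + 1 + 1 = (m + 1) + (m + 1) := by omega
  have hsplit : ∑ x ∈ range (m + 1 + (m + 1)), Nat.choose a x * Nat.choose (a + 1) (2 * m + 1 - x)
      = (∑ i ∈ range (m + 1), Nat.choose a i * Nat.choose (a + 1) (2 * m + 1 - i))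
        + ∑ i ∈ range (m + 1), Nat.choose a (m + 1 + i) * Nat.choose (a + 1) (2 * m + 1 - (m + 1 + i)) :=
    Finset.sum_range_add _ _ _
  rw [e9, hsplit]
  have hA : ∑ i ∈ range (m + 1), Nat.choose a i * Nat.choose (a + 1) (2 * m + 1 - i)
      = ∑ k ∈ range (m + 1), Nat.choose a (m - k) * Nat.choose (a + 1) (m + 1 + k) := by
    rw [← Finset.sum_range_reflect]
    refine Finset.sum_congr rfl fun k hk => ?_
    have hk' : k < m + 1 := Finset.mem_range.mp hk
    have h3 : m + 1 - 1 - k = m - k := by omega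
    have h4 : 2 * m + 1 - (m - k) = m + 1 + k := by omega
    rw [h3, h4]
  have hB : ∑ i ∈ range (m + 1), Nat.choose a (m + 1 + i) * Nat.choose (a + 1) (2 * m + 1 - (m + 1 + i))
      = ∑ k ∈ range (m + 1), Nat.choose a (m + 1 + k) * Nat.choose (a + 1) (m - k) := by
    refine Finset.sum_congr rfl fun k _ => ?_
    have h4 : 2 * m + 1 - (m + 1 + k) = m - k := by omega
    rw [h4]
  rw [hA, hB, tele a m]
  ring
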